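/- Fix n,q ≥ 1, θ > 0, p ∈ Δ^{q−1} with all p_j > 0, and 𝐧 ∈ ℕ^q with |𝐧| = n. Then Esf_{θ,p}^n({A : col A = 𝐧}) = n! p^𝐧/𝐧!, and the conditional probability of Esf_{θ,p}^n given the event {col(·) = 𝐧} satisfies, for every A ⊨ 𝐧, Esf_{θ,p}^n(A | col(·) = 𝐧) = θ^{‖A‖} M_𝐧(A)/(θ)_n; in particular this conditional distribution does not depend on p. -/

import Mathlib

open Finset Nat
open scoped Classical

/-- `col(A) = ∑_𝐚 A(𝐚) • 𝐚`, the color count vector of a colored partition. -/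
def colA {q : ℕ} (A : (Fin q → ℕ) →₀ ℕ) : Fin q → ℕ :=
  fun j => ∑ a ∈ A.support, A a * a j

/-- `‖A‖ = ∑_𝐚 A(𝐚)`, the number of parts of a colored partition. -/
def asize {q : ℕ} (A : (Fin q → ℕ) →₀ ℕ) : ℕ := ∑ a ∈ A.support, A a

/-- The set of `q`-colored partitions of `𝐧`. -/
def CPartSet {q : ℕ} (n : Fin q → ℕ) : Set ((Fin q → ℕ) →₀ ℕ) :=
  {A | A 0 = 0 ∧ colA A = n}

/-- The multinomial coefficient `M_𝐧(A)` of a colored partition `A ⊨ 𝐧`. -/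
noncomputable def Mcoef {q : ℕ} (n : Fin q → ℕ) (A : (Fin q → ℕ) →₀ ℕ) : ℝ :=
  (∏ j, (n j)! : ℝ) *
    ∏ a ∈ A.support,
      ((Nat.multinomial Finset.univ a : ℝ) ^ A a / ((∑ j, a j : ℝ) ^ A a * (A a)!))

/-- The polychromatic Ewens sampling formula
`Esf_{θ,p}^n(A) = (n!/(θ)_n) θ^{‖A‖} (p^{col A}/(col A)!) M_{col A}(A)`. -/
noncomputable def esf {q : ℕ} (θ : ℝ) (p : Fin q → ℝ) (n : ℕ)
    (A : (Fin q → ℕ) →₀ ℕ) : ℝ :=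
  (n ! : ℝ) / (ascPochhammer ℝ n).eval θ * θ ^ asize A *
    ((∏ j, p j ^ colA A j) / ∏ j, ((colA A j)! : ℝ)) * Mcoef (colA A) A

namespace EsfAux

variable {q : ℕ}

noncomputable def tw (θ : ℝ) (a : Fin q → ℕ) : ℝ :=
  θ * ((∑ i, a i) - 1)! / ∏ i, ((a i)! : ℝ)

noncomputable def term (θ : ℝ) (A : (Fin q → ℕ) →₀ ℕ) : ℝ :=
  A.prod fun a k => (tw θ a) ^ k / k !

lemma colA_eq_sum (A : (Fin q → ℕ) →₀ ℕ) (j : Fin q) :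
    colA A j = A.sum fun a k => k * a j := rfl

lemma colA_add (A B : (Fin q → ℕ) →₀ ℕ) : colA (A + B) = colA A + colA B := by
  funext j
  simp only [colA_eq_sum, Pi.add_apply]
  exact Finsupp.sum_add_index (fun a _ => zero_mul _) (fun a _ k l => add_mul _ _ _)

lemma colA_single (a : Fin q → ℕ) (k : ℕ) : colA (Finsupp.single a k) = fun j => k * a j := by
  funext j
  simp only [colA_eq_sum]
  exact Finsupp.sum_single_index (zero_mul _)

noncomputable def cpFinset (nv : Fin q → ℕ) : Finset ((Fin q → ℕ) →₀ ℕ) :=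
  (Finset.Icc 0 (Finsupp.indicator (Finset.Icc 0 nv) fun _ _ => ∑ i, nv i)).filter
    fun A => A 0 = 0 ∧ colA A = nv

lemma mem_cpFinset {nv : Fin q → ℕ} {A : (Fin q → ℕ) →₀ ℕ} :
    A ∈ cpFinset nv ↔ A 0 = 0 ∧ colA A = nv := by
  constructor
  · intro h
    exact (Finset.mem_filter.mp h).2
  · rintro ⟨h0, hc⟩
    refine Finset.mem_filter.mpr ⟨?_, h0, hc⟩
    rw [Finset.mem_Icc]
    refine ⟨Finsupp.le_def.mpr fun _ => Nat.zero_le _, ?_⟩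
    rw [Finsupp.le_def]
    intro a
    rcases Nat.eq_zero_or_pos (A a) with hA | hA
    · simp [hA]
    have ha : a ∈ A.support := Finsupp.mem_support_iff.mpr hA.ne'
    have ha0 : a ≠ 0 := by rintro rfl; rw [h0] at hA; exact hA.false
    have hle : ∀ i, a i ≤ nv i := by
      intro i
      calc a i ≤ A a * a i := Nat.le_mul_of_pos_left _ hA
        _ ≤ ∑ b ∈ A.support, A b * b i :=
          Finset.single_le_sum (f := fun b => A b * b i) (fun b _ => Nat.zero_le _) ha
        _ = nv i := by rw [← hc]; rfl
    obtain ⟨i0, hi0⟩ : ∃ i0, 0 < a i0 := by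
      by_contra hcon
      push_neg at hcon
      exact ha0 (funext fun i => Nat.le_zero.mp (hcon i))
    have hmem : a ∈ Finset.Icc 0 nv := by
      rw [Finset.mem_Icc]
      exact ⟨fun i => Nat.zero_le _, hle⟩
    rw [Finsupp.indicator_of_mem hmem]
    calc A a ≤ A a * a i0 := Nat.le_mul_of_pos_right _ hi0
      _ ≤ ∑ b ∈ A.support, A b * b i0 :=
        Finset.single_le_sum (f := fun b => A b * b i0) (fun b _ => Nat.zero_le _) ha
      _ = nv i0 := by rw [← hc]; rfl
      _ ≤ ∑ i, nv i := Finset.single_le_sum (fun i _ => Nat.zero_le _) (Finset.mem_univ i0)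

lemma cpart_coe (nv : Fin q → ℕ) : CPartSet nv = ↑(cpFinset nv) := by
  ext A
  simp [CPartSet, mem_cpFinset]

lemma term_add_single (θ : ℝ) (B : (Fin q → ℕ) →₀ ℕ) (c : Fin q → ℕ) :
    ((B c : ℝ) + 1) * term θ (B + Finsupp.single c 1) = tw θ c * term θ B := by
  have hg : ∀ (f : (Fin q → ℕ) →₀ ℕ),
      term θ f = (tw θ c ^ f c / (f c)!) * (f.erase c).prod fun a k => (tw θ a) ^ k / k ! := by
    intro f
    exact (Finsupp.mul_prod_erase' f c _ (fun i => by simp)).symm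
  rw [hg, hg]
  have h1 : (B + Finsupp.single c 1).erase c = B.erase c := by
    ext x
    rcases eq_or_ne x c with rfl | hx
    · simp
    · simp [Finsupp.erase_ne hx, Finsupp.single_eq_of_ne (Ne.symm hx)]
  rw [h1, Finsupp.add_apply, Finsupp.single_eq_same]
  have hfac : ((B c + 1)! : ℝ) = (B c + 1) * (B c)! := by
    rw [Nat.factorial_succ]; push_cast; ring
  have hne : ((B c)! : ℝ) ≠ 0 := Nat.cast_ne_zero.mpr (Nat.factorial_ne_zero _)
  have hne2 : ((B c : ℝ) + 1) ≠ 0 := by positivity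
  rw [pow_succ, hfac]
  field_simp

lemma tw_step (θ : ℝ) (j : Fin q) (b : Fin q → ℕ) (hb : ∃ i, 0 < b i) :
    ((b j : ℝ) + 1) * tw θ (fun i => b i + if i = j then 1 else 0) =
      (∑ i, (b i : ℝ)) * tw θ b := by
  have hs : ∑ i, (b i + if i = j then 1 else 0) = (∑ i, b i) + 1 := by
    rw [Finset.sum_add_distrib]
    simp
  have hsb : 0 < ∑ i, b i := by
    obtain ⟨i, hi⟩ := hb
    exact lt_of_lt_of_le hi (Finset.single_le_sum (fun i _ => Nat.zero_le _) (Finset.mem_univ i))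
  have hprod : (∏ i, (((b i + if i = j then 1 else 0))! : ℝ)) =
      ((b j : ℝ) + 1) * ∏ i, ((b i)! : ℝ) := by
    have : ∀ i, (((b i + if i = j then 1 else 0))! : ℝ) =
        ((b i)! : ℝ) * (if i = j then (b j : ℝ) + 1 else 1) := by
      intro i
      rcases eq_or_ne i j with rfl | hi
      · simp [Nat.factorial_succ]; push_cast; ring
      · simp [hi]
    rw [Finset.prod_congr rfl (fun i _ => this i), Finset.prod_mul_distrib]
    simp [mul_comm]
  unfold tw
  rw [hprod, hs]
  have h1 : ((∑ i, b i) + 1 - 1) = ∑ i, b i := by omega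
  rw [h1]
  have h2 : ((∑ i, b i)! : ℝ) = (∑ i, b i) * ((∑ i, b i - 1)!) := by
    rw [← Nat.mul_factorial_pred hsb.ne']; push_cast; ring
  have h3 : (∑ i, (b i : ℝ)) = ((∑ i, b i : ℕ) : ℝ) := by push_cast; ring
  rw [h2, h3]
  have hne : (∏ i, ((b i)! : ℝ)) ≠ 0 := by
    apply Finset.prod_ne_zero_iff.mpr
    intro i _
    exact Nat.cast_ne_zero.mpr (Nat.factorial_ne_zero _)
  have hne2 : ((b j : ℝ) + 1) ≠ 0 := by positivity
  field_simp

lemma tw_ej (θ : ℝ) (j : Fin q) : tw θ (fun i => if i = j then 1 else 0) = θ := by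
  unfold tw
  have h1 : ∑ i, (if i = j then 1 else 0) = 1 := by simp
  have h2 : (∏ i, (((if i = j then 1 else 0 : ℕ))! : ℝ)) = 1 := by
    apply Finset.prod_eq_one
    intro i _
    rcases eq_or_ne i j with rfl | hi
    · simp
    · simp [hi]
  rw [h1, h2]
  simp

lemma sub_add_single (A : (Fin q → ℕ) →₀ ℕ) (c : Fin q → ℕ) (hc : 1 ≤ A c) :
    (A - Finsupp.single c 1) + Finsupp.single c 1 = A := by
  ext z
  simp only [Finsupp.add_apply, Finsupp.tsub_apply, Finsupp.single_apply]
  rcases eq_or_ne c z with rfl | h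
  · simp
    omega
  · simp [h]

lemma add_sub_single (A : (Fin q → ℕ) →₀ ℕ) (c : Fin q → ℕ) :
    (A + Finsupp.single c 1) - Finsupp.single c 1 = A := by
  ext z
  simp only [Finsupp.add_apply, Finsupp.tsub_apply, Finsupp.single_apply]
  rcases eq_or_ne c z with rfl | h
  · simp
  · simp [h]

lemma move_move (A : (Fin q → ℕ) →₀ ℕ) (a b : Fin q → ℕ) (ha : 1 ≤ A a) (hab : a ≠ b) :
    (A - Finsupp.single a 1 + Finsupp.single b 1) - Finsupp.single b 1 + Finsupp.single a 1
      = A := by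
  ext z
  simp only [Finsupp.add_apply, Finsupp.tsub_apply, Finsupp.single_apply]
  rcases eq_or_ne a z with rfl | h1
  · have h2 : ¬ b = a := fun h => hab h.symm
    simp [h2]
    omega
  · rcases eq_or_ne b z with rfl | h2
    · simp [h1]
    · simp [h1, h2]

lemma colA_sub_single (A : (Fin q → ℕ) →₀ ℕ) (c : Fin q → ℕ) (hc : 1 ≤ A c) (i : Fin q) :
    colA (A - Finsupp.single c 1) i + c i = colA A i := by
  conv_rhs => rw [← sub_add_single A c hc]
  rw [colA_add, colA_single]
  simp

lemma mem_sub_single {nv mv : Fin q → ℕ} {A : (Fin q → ℕ) →₀ ℕ} {c : Fin q → ℕ}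
    (hA : A ∈ cpFinset nv) (hc : 1 ≤ A c) (h : ∀ i, mv i + c i = nv i) :
    A - Finsupp.single c 1 ∈ cpFinset mv := by
  obtain ⟨h0, hcol⟩ := mem_cpFinset.mp hA
  refine mem_cpFinset.mpr ⟨?_, ?_⟩
  · have : ((A - Finsupp.single c 1 : (Fin q → ℕ) →₀ ℕ)) 0 = A 0 - Finsupp.single c 1 0 :=
      Finsupp.tsub_apply _ _ _
    omega
  · funext i
    have := colA_sub_single A c hc i
    rw [hcol] at this
    have := h i
    omega

lemma mem_add_single {nv mv : Fin q → ℕ} {B : (Fin q → ℕ) →₀ ℕ} {c : Fin q → ℕ}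
    (hB : B ∈ cpFinset mv) (hc : c ≠ 0) (h : ∀ i, mv i + c i = nv i) :
    B + Finsupp.single c 1 ∈ cpFinset nv := by
  obtain ⟨h0, hcol⟩ := mem_cpFinset.mp hB
  refine mem_cpFinset.mpr ⟨?_, ?_⟩
  · rw [Finsupp.add_apply, h0, Finsupp.single_apply, if_neg hc]
    rfl
  · rw [colA_add, colA_single, hcol]
    funext i
    simp [h i]

lemma mul_term (θ : ℝ) (A : (Fin q → ℕ) →₀ ℕ) (c : Fin q → ℕ) (hc : 1 ≤ A c) :
    (A c : ℝ) * term θ A = tw θ c * term θ (A - Finsupp.single c 1) := by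
  have h := term_add_single θ (A - Finsupp.single c 1) c
  rw [sub_add_single A c hc] at h
  have h2 : (((A - Finsupp.single c 1 : (Fin q → ℕ) →₀ ℕ) c : ℕ) : ℝ) + 1 = (A c : ℝ) := by
    rw [Finsupp.tsub_apply, Finsupp.single_eq_same]
    have h3 : A c - 1 + 1 = A c := by omega
    exact_mod_cast congrArg (Nat.cast (R := ℝ)) h3
  rw [h2] at h
  exact h


lemma cp_rec (θ : ℝ) (mv : Fin q → ℕ) (j : Fin q) :
    ((mv j : ℝ) + 1) * ∑ A ∈ cpFinset (fun i => mv i + if i = j then 1 else 0), term θ A =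
      (θ + ∑ i, (mv i : ℝ)) * ∑ B ∈ cpFinset mv, term θ B := by
  classical
  set ej : Fin q → ℕ := fun i => if i = j then 1 else 0 with hej
  have hejv : ∀ i, ej i = if i = j then 1 else 0 := fun i => by rw [hej]
  have hejj : ej j = 1 := by simp [hejv j]
  have hejn : ∀ i, i ≠ j → ej i = 0 := fun i h => by simp [hejv i, h]
  set nv : Fin q → ℕ := fun i => mv i + ej i with hnv
  have hnvv : ∀ i, nv i = mv i + ej i := fun i => by rw [hnv]
  have hej0 : ej ≠ 0 := by
    intro h
    have h2 := congrFun h j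
    rw [hejj] at h2
    exact one_ne_zero h2
  set S := ((cpFinset nv).sigma fun A => A.support).filter (fun x => 0 < x.2 j) with hS
  set f : ((_ : (Fin q → ℕ) →₀ ℕ) × (Fin q → ℕ)) → ℝ :=
    fun x => ((x.1 x.2 * x.2 j : ℕ) : ℝ) * term θ x.1 with hf
  have step1 : ((mv j : ℝ) + 1) * ∑ A ∈ cpFinset nv, term θ A = ∑ x ∈ S, f x := by
    rw [hS, Finset.sum_filter_of_ne (by
      intro x _ hfx
      rcases Nat.eq_zero_or_pos (x.2 j) with h | h
      · exfalso; apply hfx; rw [hf]; simp [h]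
      · exact h)]
    rw [Finset.sum_sigma (cpFinset nv) (fun A => A.support) f, Finset.mul_sum]
    refine Finset.sum_congr rfl fun A hA => ?_
    have hcol := (mem_cpFinset.mp hA).2
    have h1 : (mv j : ℝ) + 1 = ((∑ a ∈ A.support, A a * a j : ℕ) : ℝ) := by
      have h2 : ∑ a ∈ A.support, A a * a j = nv j := congrFun hcol j
      rw [h2, hnvv j, hejj]
      push_cast
      ring
    rw [h1, Nat.cast_sum, Finset.sum_mul]
  have split := Finset.sum_filter_add_sum_filter_not S (fun x => x.2 = ej) f
  have hmemS : ∀ x ∈ S, x.1 ∈ cpFinset nv ∧ 1 ≤ x.1 x.2 ∧ 0 < x.2 j := by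
    intro x hx
    rw [hS, Finset.mem_filter, Finset.mem_sigma] at hx
    obtain ⟨⟨h1, h2⟩, h3⟩ := hx
    exact ⟨h1, Nat.one_le_iff_ne_zero.mpr (Finsupp.mem_support_iff.mp h2), h3⟩
  have hdiag : ∑ x ∈ S.filter (fun x => x.2 = ej), f x = θ * ∑ B ∈ cpFinset mv, term θ B := by
    rw [Finset.mul_sum]
    refine Finset.sum_nbij' (i := fun x => x.1 - Finsupp.single ej 1)
      (j := fun B => ⟨B + Finsupp.single ej 1, ej⟩) ?_ ?_ ?_ ?_ ?_
    · intro x hx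
      rw [Finset.mem_filter] at hx
      obtain ⟨h1, h2, _⟩ := hmemS x hx.1
      rw [hx.2] at h2
      exact mem_sub_single h1 h2 (fun i => (hnvv i).symm)
    · intro B hB
      rw [Finset.mem_filter, hS, Finset.mem_filter, Finset.mem_sigma]
      have hmem : B + Finsupp.single ej 1 ∈ cpFinset nv :=
        mem_add_single hB hej0 (fun i => (hnvv i).symm)
      refine ⟨⟨⟨hmem, ?_⟩, ?_⟩, rfl⟩
      · rw [Finsupp.mem_support_iff, Finsupp.add_apply, Finsupp.single_eq_same]
        omega
      · simpa using hejj ▸ Nat.one_pos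
    · intro x hx
      rw [Finset.mem_filter] at hx
      obtain ⟨h1, h2, _⟩ := hmemS x hx.1
      obtain ⟨A, a⟩ := x
      have h4 : a = ej := hx.2
      simp only at h2
      rw [h4] at h2
      refine Sigma.ext ?_ (heq_of_eq h4.symm)
      simp only
      exact sub_add_single A ej h2
    · intro B _
      exact add_sub_single B ej
    · intro x hx
      rw [Finset.mem_filter] at hx
      obtain ⟨h1, h2, _⟩ := hmemS x hx.1
      obtain ⟨A, a⟩ := x
      have h4 : a = ej := hx.2
      simp only at h2
      rw [h4] at h2
      have htw : tw θ ej = θ := by rw [hej]; exact tw_ej θ j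
      rw [hf]
      simp only
      rw [h4, hejj, mul_one, mul_term θ A ej h2, htw]
  have hoff : ∑ x ∈ S.filter (fun x => ¬ x.2 = ej), f x
      = (∑ i, (mv i : ℝ)) * ∑ B ∈ cpFinset mv, term θ B := by
    have hRHS : (∑ i, (mv i : ℝ)) * ∑ B ∈ cpFinset mv, term θ B
        = ∑ y ∈ (cpFinset mv).sigma (fun B => B.support),
            ((y.1 y.2 * ∑ i, y.2 i : ℕ) : ℝ) * term θ y.1 := by
      rw [Finset.sum_sigma (cpFinset mv) (fun B => B.support)
        (fun y => ((y.1 y.2 * ∑ i, y.2 i : ℕ) : ℝ) * term θ y.1), Finset.mul_sum]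
      refine Finset.sum_congr rfl fun B hB => ?_
      have hcol := (mem_cpFinset.mp hB).2
      have hsum : ∑ b ∈ B.support, B b * ∑ i, b i = ∑ i, colA B i := by
        simp_rw [Finset.mul_sum]
        rw [Finset.sum_comm]
        rfl
      have hc2 : ∑ b ∈ B.support, ((B b * ∑ i, b i : ℕ) : ℝ) = ∑ i, (mv i : ℝ) := by
        rw [← Nat.cast_sum, hsum, hcol, Nat.cast_sum]
      rw [← hc2, Finset.sum_mul]
    rw [hRHS]
    refine Finset.sum_nbij'
      (i := fun x => ⟨x.1 - Finsupp.single x.2 1 + Finsupp.single (fun i => x.2 i - ej i) 1,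
        fun i => x.2 i - ej i⟩)
      (j := fun y => ⟨y.1 - Finsupp.single y.2 1 + Finsupp.single (fun i => y.2 i + ej i) 1,
        fun i => y.2 i + ej i⟩) ?_ ?_ ?_ ?_ ?_
    · rintro ⟨A, a⟩ hx
      rw [Finset.mem_filter] at hx
      obtain ⟨hA, hAa, haj⟩ := hmemS _ hx.1
      have hane : ¬ a = ej := hx.2
      simp only at hA hAa haj hane ⊢
      have hb0 : (fun i => a i - ej i) ≠ 0 := by
        intro h
        apply hane
        funext i
        have hi := congrFun h i
        simp only [Pi.zero_apply] at hi
        by_cases hij : i = j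
        · subst hij; rw [hejj] at hi ⊢; omega
        · rw [hejn i hij] at hi ⊢; omega
      have hsub : ∀ i, colA (A - Finsupp.single a 1) i + a i = nv i := by
        intro i
        rw [← (mem_cpFinset.mp hA).2]
        exact colA_sub_single A a hAa i
      have h1 : A - Finsupp.single a 1 ∈ cpFinset (fun i => nv i - a i) :=
        mem_sub_single hA hAa (fun i => by have := hsub i; omega)
      have H : A - Finsupp.single a 1 + Finsupp.single (fun i => a i - ej i) 1
          ∈ cpFinset mv := by
        refine mem_add_single h1 hb0 (fun i => ?_)
        have h5 := hsub i
        have h6 := hnvv i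
        have h7 : ej i ≤ a i := by
          rw [hejv i]
          by_cases hij : i = j
          · subst hij; rw [if_pos rfl]; omega
          · simp [hij]
        omega
      rw [Finset.mem_sigma]
      refine ⟨H, ?_⟩
      rw [Finsupp.mem_support_iff, Finsupp.add_apply, Finsupp.single_eq_same]
      omega
    · rintro ⟨B, b⟩ hy
      rw [Finset.mem_sigma] at hy
      obtain ⟨hB, hb⟩ := hy
      have hBb : 1 ≤ B b := Nat.one_le_iff_ne_zero.mpr (Finsupp.mem_support_iff.mp hb)
      have hb0 : b ≠ 0 := by
        intro h
        have h0 := (mem_cpFinset.mp hB).1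
        rw [h, h0] at hBb
        omega
      simp only
      have hsub : ∀ i, colA (B - Finsupp.single b 1) i + b i = mv i := by
        intro i
        rw [← (mem_cpFinset.mp hB).2]
        exact colA_sub_single B b hBb i
      have h1 : B - Finsupp.single b 1 ∈ cpFinset (fun i => mv i - b i) :=
        mem_sub_single hB hBb (fun i => by have := hsub i; omega)
      have ha0 : (fun i => b i + ej i) ≠ 0 := by
        intro h
        have h2 := congrFun h j
        simp only [Pi.zero_apply, hejj] at h2
        omega
      have H : B - Finsupp.single b 1 + Finsupp.single (fun i => b i + ej i) 1
          ∈ cpFinset nv := by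
        refine mem_add_single h1 ha0 (fun i => ?_)
        have h5 := hsub i
        have h6 := hnvv i
        omega
      rw [Finset.mem_filter, hS, Finset.mem_filter, Finset.mem_sigma]
      refine ⟨⟨⟨H, ?_⟩, ?_⟩, ?_⟩
      · rw [Finsupp.mem_support_iff, Finsupp.add_apply, Finsupp.single_eq_same]
        omega
      · simp only [hejj]
        omega
      · simp only
        intro h
        apply hb0
        funext i
        have h2 := congrFun h i
        simp only [Pi.zero_apply]
        omega
    · rintro ⟨A, a⟩ hx
      rw [Finset.mem_filter] at hx
      obtain ⟨hA, hAa, haj⟩ := hmemS _ hx.1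
      have hane : ¬ a = ej := hx.2
      simp only at hAa haj hane ⊢
      have h7 : ∀ i, ej i ≤ a i := by
        intro i
        by_cases hij : i = j
        · subst hij; rw [hejj]; omega
        · rw [hejn i hij]; omega
      have h2 : (fun i => (a i - ej i) + ej i) = a := by
        funext i
        have := h7 i
        omega
      have hab : a ≠ (fun i => a i - ej i) := by
        intro h
        have h3 := congrFun h j
        rw [hejj] at h3
        omega
      refine Sigma.ext ?_ (heq_of_eq ?_)
      · simp only
        rw [h2]
        exact move_move A a _ hAa hab
      · simp only
        rw [h2]
    · rintro ⟨B, b⟩ hy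
      rw [Finset.mem_sigma] at hy
      obtain ⟨hB, hb⟩ := hy
      have hBb : 1 ≤ B b := Nat.one_le_iff_ne_zero.mpr (Finsupp.mem_support_iff.mp hb)
      have h2 : (fun i => (b i + ej i) - ej i) = b := by
        funext i
        omega
      have hab : b ≠ (fun i => b i + ej i) := by
        intro h
        have h3 := congrFun h j
        rw [hejj] at h3
        omega
      refine Sigma.ext ?_ (heq_of_eq ?_)
      · simp only
        rw [h2]
        exact move_move B b _ hBb hab
      · simp only
        rw [h2]
    · rintro ⟨A, a⟩ hx
      rw [Finset.mem_filter] at hx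
      obtain ⟨hA, hAa, haj⟩ := hmemS _ hx.1
      have hane : ¬ a = ej := hx.2
      simp only at hA hAa haj hane
      set b : Fin q → ℕ := fun i => a i - ej i with hb
      have h7 : ∀ i, ej i ≤ a i := by
        intro i
        by_cases hij : i = j
        · subst hij; rw [hejj]; omega
        · rw [hejn i hij]; omega
      have hb0 : b ≠ 0 := by
        intro h
        apply hane
        funext i
        have hi := congrFun h i
        simp only [hb, Pi.zero_apply] at hi
        have := h7 i
        omega
      have hbex : ∃ i, 0 < b i := by
        by_contra hcon
        push_neg at hcon
        exact hb0 (funext fun i => Nat.le_zero.mp (hcon i))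
      set B' : (Fin q → ℕ) →₀ ℕ :=
        A - Finsupp.single a 1 + Finsupp.single b 1 with hB'
      have hBb' : B' b = ((A - Finsupp.single a 1 : (Fin q → ℕ) →₀ ℕ)) b + 1 := by
        rw [hB', Finsupp.add_apply, Finsupp.single_eq_same]
      have hC : B' - Finsupp.single b 1 = A - Finsupp.single a 1 := by
        rw [hB']
        exact add_sub_single _ b
      have e1 : (A a : ℝ) * term θ A = tw θ a * term θ (A - Finsupp.single a 1) :=
        mul_term θ A a hAa
      have e2 : (B' b : ℝ) * term θ B' = tw θ b * term θ (A - Finsupp.single a 1) := by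
        rw [← hC]
        exact mul_term θ B' b (by rw [hBb']; omega)
      have ha_eq : (fun i => b i + if i = j then 1 else 0) = a := by
        funext i
        rw [hb]
        simp only
        rw [← hejv i]
        have := h7 i
        omega
      have hts := tw_step θ j b hbex
      rw [ha_eq] at hts
      have hcast : ((b j : ℝ) + 1) = (a j : ℝ) := by
        have h8 : a j = b j + 1 := by
          have := h7 j
          rw [hb]
          simp only
          rw [hejj] at this ⊢
          omega
        rw [h8]
        push_cast
        ring
      rw [hcast] at hts
      have key : (a j : ℝ) * (tw θ a * term θ (A - Finsupp.single a 1))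
          = (∑ i, (b i : ℝ)) * (tw θ b * term θ (A - Finsupp.single a 1)) := by
        calc (a j : ℝ) * (tw θ a * term θ (A - Finsupp.single a 1))
            = ((a j : ℝ) * tw θ a) * term θ (A - Finsupp.single a 1) := by ring
          _ = ((∑ i, (b i : ℝ)) * tw θ b) * term θ (A - Finsupp.single a 1) := by rw [hts]
          _ = _ := by ring
      rw [hf]
      simp only
      calc ((A a * a j : ℕ) : ℝ) * term θ A
          = (a j : ℝ) * ((A a : ℝ) * term θ A) := by push_cast; ring
        _ = (a j : ℝ) * (tw θ a * term θ (A - Finsupp.single a 1)) := by rw [e1]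
        _ = (∑ i, (b i : ℝ)) * (tw θ b * term θ (A - Finsupp.single a 1)) := key
        _ = (∑ i, (b i : ℝ)) * ((B' b : ℝ) * term θ B') := by rw [← e2]
        _ = ((B' b * ∑ i, b i : ℕ) : ℝ) * term θ B' := by push_cast; ring
  rw [step1, ← split, hdiag, hoff]
  ring


lemma cpFinset_zero : cpFinset (0 : Fin q → ℕ) = {0} := by
  ext A
  rw [Finset.mem_singleton, mem_cpFinset]
  constructor
  · rintro ⟨h0, hc⟩
    ext a
    rw [Finsupp.coe_zero, Pi.zero_apply]
    by_contra hA
    have ha : a ∈ A.support := Finsupp.mem_support_iff.mpr hA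
    have ha0 : a ≠ 0 := by rintro rfl; exact hA h0
    obtain ⟨i0, hi0⟩ : ∃ i0, 0 < a i0 := by
      by_contra hcon
      push_neg at hcon
      exact ha0 (funext fun i => Nat.le_zero.mp (hcon i))
    have hle : A a * a i0 ≤ colA A i0 :=
      Finset.single_le_sum (f := fun b => A b * b i0) (fun b _ => Nat.zero_le _) ha
    rw [hc] at hle
    simp only [Pi.zero_apply] at hle
    have : 0 < A a * a i0 := Nat.mul_pos (Nat.pos_of_ne_zero hA) hi0
    omega
  · rintro rfl
    refine ⟨rfl, ?_⟩
    funext i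
    simp [colA]

lemma key_identity (θ : ℝ) : ∀ (n : ℕ) (nv : Fin q → ℕ), ∑ i, nv i = n →
    (∑ A ∈ cpFinset nv, term θ A) * ∏ i, ((nv i)! : ℝ) = (ascPochhammer ℝ n).eval θ := by
  intro n
  induction n with
  | zero =>
    intro nv h
    have hnv : nv = 0 := funext fun i =>
      (Finset.sum_eq_zero_iff.mp h) i (Finset.mem_univ i)
    subst hnv
    rw [cpFinset_zero]
    simp [term, ascPochhammer_zero]
  | succ n ih =>
    intro nv h
    obtain ⟨j, hj⟩ : ∃ j, 0 < nv j := by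
      by_contra hcon
      push_neg at hcon
      have h2 : ∑ i, nv i = 0 :=
        Finset.sum_eq_zero (fun i _ => Nat.le_zero.mp (hcon i))
      omega
    set mv : Fin q → ℕ := fun i => nv i - if i = j then 1 else 0 with hmv
    have hmvv : ∀ i, mv i = nv i - if i = j then 1 else 0 := fun i => by rw [hmv]
    have h1 : ∀ i, nv i = mv i + if i = j then 1 else 0 := by
      intro i
      rw [hmvv i]
      by_cases hij : i = j
      · subst hij; simp; omega
      · simp [hij]
    have hnveq : nv = fun i => mv i + if i = j then 1 else 0 := funext h1
    have hmsum : ∑ i, mv i = n := by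
      have h2 : ∑ i, nv i = (∑ i, mv i) + 1 := by
        calc ∑ i, nv i = ∑ i, (mv i + if i = j then 1 else 0) :=
              Finset.sum_congr rfl (fun i _ => h1 i)
          _ = (∑ i, mv i) + ∑ i, (if i = j then (1:ℕ) else 0) := Finset.sum_add_distrib
          _ = (∑ i, mv i) + 1 := by simp
      omega
    have hrec := cp_rec θ mv j
    rw [← hnveq] at hrec
    have ihm := ih mv hmsum
    have hprod : (∏ i, ((nv i)! : ℝ)) = ((mv j : ℝ) + 1) * ∏ i, ((mv i)! : ℝ) := by
      have hterm : ∀ i, ((nv i)! : ℝ)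
          = ((mv i)! : ℝ) * (if i = j then (mv j : ℝ) + 1 else 1) := by
        intro i
        by_cases hij : i = j
        · subst hij
          have h3 : nv i = mv i + 1 := by rw [h1 i]; simp
          rw [h3, Nat.factorial_succ]
          simp only [if_pos rfl]
          push_cast
          ring
        · have h3 : nv i = mv i := by rw [h1 i]; simp [hij]
          rw [h3]
          simp [hij]
      rw [Finset.prod_congr rfl (fun i _ => hterm i), Finset.prod_mul_distrib]
      simp [mul_comm]
    rw [hprod, ascPochhammer_succ_eval]
    have hfin : (∑ A ∈ cpFinset nv, term θ A) * (((mv j:ℝ)+1) * ∏ i, ((mv i)!:ℝ))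
        = (((mv j:ℝ)+1) * ∑ A ∈ cpFinset nv, term θ A) * ∏ i, ((mv i)!:ℝ) := by ring
    rw [hfin, hrec]
    have hcast : (∑ i, (mv i:ℝ)) = (n:ℝ) := by
      rw [← Nat.cast_sum, hmsum]
    rw [hcast, mul_assoc, ihm]
    ring

lemma tw_eq (θ : ℝ) {a : Fin q → ℕ} (ha : a ≠ 0) :
    tw θ a = θ * (Nat.multinomial Finset.univ a : ℝ) / (∑ i, (a i : ℝ)) := by
  have hs : 0 < ∑ i, a i := by
    obtain ⟨i0, hi0⟩ : ∃ i0, 0 < a i0 := by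
      by_contra hcon
      push_neg at hcon
      exact ha (funext fun i => Nat.le_zero.mp (hcon i))
    exact lt_of_lt_of_le hi0
      (Finset.single_le_sum (fun i _ => Nat.zero_le _) (Finset.mem_univ i0))
  have hspec : ((∏ i, (a i)! : ℕ) : ℝ) * (Nat.multinomial Finset.univ a : ℝ)
      = (((∑ i, a i)!) : ℝ) := by
    exact_mod_cast congrArg (Nat.cast (R := ℝ)) (Nat.multinomial_spec Finset.univ a)
  have hsfac : (((∑ i, a i)!) : ℝ) = (∑ i, a i : ℕ) * (((∑ i, a i) - 1)!) := by
    exact_mod_cast congrArg (Nat.cast (R := ℝ)) (Nat.mul_factorial_pred hs.ne').symm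
  have hF : (∏ i, ((a i)! : ℝ)) ≠ 0 := by
    apply Finset.prod_ne_zero_iff.mpr
    intro i _
    exact Nat.cast_ne_zero.mpr (Nat.factorial_ne_zero _)
  have hsne : (∑ i, (a i : ℝ)) ≠ 0 := by
    have h4 : (∑ i, (a i : ℝ)) = ((∑ i, a i : ℕ) : ℝ) := by push_cast; ring
    rw [h4]
    exact Nat.cast_ne_zero.mpr hs.ne'
  unfold tw
  rw [div_eq_div_iff hF hsne]
  have hcast2 : (∑ i, (a i : ℝ)) = ((∑ i, a i : ℕ) : ℝ) := by push_cast; ring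
  have hcastP : (∏ i, ((a i)! : ℝ)) = ((∏ i, (a i)! : ℕ) : ℝ) := by push_cast; ring
  rw [hcast2, hcastP]
  linear_combination (-θ) * hsfac - θ * hspec


lemma theta_mul_Mcoef (θ : ℝ) {nv : Fin q → ℕ} {A : (Fin q → ℕ) →₀ ℕ}
    (hA : A ∈ cpFinset nv) :
    θ ^ asize A * Mcoef nv A = (∏ i, ((nv i)! : ℝ)) * term θ A := by
  have h0 := (mem_cpFinset.mp hA).1
  unfold Mcoef
  have h1 : θ ^ asize A = ∏ a ∈ A.support, θ ^ A a :=
    (Finset.prod_pow_eq_pow_sum A.support (fun a => A a) θ).symm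
  have h2 : term θ A = ∏ a ∈ A.support, (tw θ a) ^ A a / (A a)! := rfl
  rw [h1, h2, ← mul_assoc, mul_comm (∏ a ∈ A.support, θ ^ A a), mul_assoc,
    ← Finset.prod_mul_distrib]
  congr 1
  refine Finset.prod_congr rfl fun a ha => ?_
  have ha0 : a ≠ 0 := by
    rintro rfl
    exact (Finsupp.mem_support_iff.mp ha) h0
  rw [tw_eq θ ha0]
  have hsne : (∑ i, (a i : ℝ)) ≠ 0 := by
    obtain ⟨i0, hi0⟩ : ∃ i0, 0 < a i0 := by
      by_contra hcon
      push_neg at hcon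
      exact ha0 (funext fun i => Nat.le_zero.mp (hcon i))
    have h4 : (∑ i, (a i : ℝ)) = ((∑ i, a i : ℕ) : ℝ) := by push_cast; ring
    rw [h4]
    refine Nat.cast_ne_zero.mpr ?_
    have h5 := Finset.single_le_sum (f := a) (fun i _ => Nat.zero_le _)
      (Finset.mem_univ i0)
    omega
  have hkne : ((A a)! : ℝ) ≠ 0 := Nat.cast_ne_zero.mpr (Nat.factorial_ne_zero _)
  rw [div_pow, mul_pow]
  field_simp

end EsfAux

theorem esf_conditioned_on_col (n q : ℕ) (hn : 1 ≤ n) (hq : 1 ≤ q)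
    (θ : ℝ) (hθ : 0 < θ) (p : Fin q → ℝ) (hp : ∀ j, 0 < p j) (hp1 : ∑ j, p j = 1)
    (nv : Fin q → ℕ) (hnv : ∑ j, nv j = n) :
    (∑ᶠ A ∈ CPartSet nv, esf θ p n A =
      (n ! : ℝ) * (∏ j, p j ^ nv j) / ∏ j, ((nv j)! : ℝ)) ∧
    (∀ A ∈ CPartSet nv,
      esf θ p n A / (∑ᶠ A' ∈ CPartSet nv, esf θ p n A') =
        θ ^ asize A * Mcoef nv A / (ascPochhammer ℝ n).eval θ) := by
  classical
  have hpoch : (0:ℝ) < (ascPochhammer ℝ n).eval θ := ascPochhammer_pos n θ hθ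
  have hF : (0:ℝ) < ∏ j, ((nv j)! : ℝ) := by
    apply Finset.prod_pos
    intro i _
    exact_mod_cast Nat.factorial_pos _
  have hP : (0:ℝ) < ∏ j, p j ^ nv j := by
    apply Finset.prod_pos
    intro i _
    exact pow_pos (hp i) _
  have hsum : ∑ A ∈ EsfAux.cpFinset nv, θ ^ asize A * Mcoef nv A
      = (ascPochhammer ℝ n).eval θ := by
    calc ∑ A ∈ EsfAux.cpFinset nv, θ ^ asize A * Mcoef nv A
        = ∑ A ∈ EsfAux.cpFinset nv, (∏ i, ((nv i)! : ℝ)) * EsfAux.term θ A :=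
          Finset.sum_congr rfl (fun A hA => EsfAux.theta_mul_Mcoef θ hA)
      _ = (∑ A ∈ EsfAux.cpFinset nv, EsfAux.term θ A) * ∏ i, ((nv i)! : ℝ) := by
          rw [← Finset.mul_sum]
          ring
      _ = (ascPochhammer ℝ n).eval θ := EsfAux.key_identity θ n nv hnv
  have he : ∀ A ∈ EsfAux.cpFinset nv, esf θ p n A
      = ((n ! : ℝ) / (ascPochhammer ℝ n).eval θ)
        * ((∏ j, p j ^ nv j) / ∏ j, ((nv j)! : ℝ)) * (θ ^ asize A * Mcoef nv A) := by
    intro A hA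
    have hc := (EsfAux.mem_cpFinset.mp hA).2
    unfold esf
    rw [hc]
    ring
  have h1 : ∑ᶠ A ∈ CPartSet nv, esf θ p n A
      = (n ! : ℝ) * (∏ j, p j ^ nv j) / ∏ j, ((nv j)! : ℝ) := by
    rw [EsfAux.cpart_coe, finsum_mem_coe_finset]
    rw [Finset.sum_congr rfl he, ← Finset.mul_sum, hsum]
    field_simp
  refine ⟨h1, ?_⟩
  intro A hA
  rw [h1]
  have hA' : A ∈ EsfAux.cpFinset nv := by
    rw [EsfAux.cpart_coe] at hA
    exact hA
  rw [he A hA']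
  rw [div_eq_div_iff (by positivity) hpoch.ne']
  field_simp
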